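/- Let Σ be a real symmetric positive definite d×d matrix and β > 0. Let Σ_t be a differentiable family of real symmetric d×d matrices satisfying the matrix ODE dΣ_t/dt = −Σ_t Σ⁻¹ − Σ⁻¹ Σ_t + 2β⁻¹ I. Then d/dt Tr((Σ_t − β⁻¹Σ)²) = −4 Tr((Σ_t − β⁻¹Σ) Σ⁻¹ (Σ_t − β⁻¹Σ)) ≤ 0; consequently, t ↦ ‖Σ_t − β⁻¹Σ‖_F is nonincreasing, where ‖·‖_F denotes the Frobenius norm. -/

import Mathlib

open Matrix

/-- Frobenius norm of a real square matrix. -/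
noncomputable def frobNorm {d : ℕ} (A : Matrix (Fin d) (Fin d) ℝ) : ℝ :=
  Real.sqrt (∑ i, ∑ j, (A i j) ^ 2)

lemma trace_nonneg_of_posSemidef {d : ℕ} {M : Matrix (Fin d) (Fin d) ℝ}
    (h : M.PosSemidef) : 0 ≤ M.trace := by
  rw [Matrix.trace]
  refine Finset.sum_nonneg fun i _ => ?_
  exact h.diag_nonneg

/-- leading-order continuous-time analogue of Theorem 4.4 of the paper:
if the symmetric family `S t` solves `dS/dt = −S Σ⁻¹ − Σ⁻¹ S + 2β⁻¹ I` (entrywise),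
then `d/dt Tr((S_t − β⁻¹Σ)²) = −4 Tr((S_t − β⁻¹Σ) Σ⁻¹ (S_t − β⁻¹Σ)) ≤ 0`, and the
Frobenius distance `t ↦ ‖S_t − β⁻¹Σ‖_F` is nonincreasing.  `Sig` plays the role of `Σ`. -/
theorem ttbrwp_covariance_ode_decay {d : ℕ} (β : ℝ) (hβ : 0 < β)
    (Sig : Matrix (Fin d) (Fin d) ℝ) (hSig : Sig.PosDef) (hSigSymm : Sig.IsSymm)
    (S : ℝ → Matrix (Fin d) (Fin d) ℝ)
    (hsymm : ∀ t, (S t).IsSymm)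
    (hode : ∀ t i j, HasDerivAt (fun s => S s i j)
      ((-(S t * Sig⁻¹) - Sig⁻¹ * S t + (2 * β⁻¹) • (1 : Matrix (Fin d) (Fin d) ℝ)) i j) t) :
    (∀ t, HasDerivAt (fun s => ((S s - β⁻¹ • Sig) * (S s - β⁻¹ • Sig)).trace)
        (-4 * ((S t - β⁻¹ • Sig) * Sig⁻¹ * (S t - β⁻¹ • Sig)).trace) t ∧
      -4 * ((S t - β⁻¹ • Sig) * Sig⁻¹ * (S t - β⁻¹ • Sig)).trace ≤ 0) ∧
    Antitone (fun t => frobNorm (S t - β⁻¹ • Sig)) := by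
  have hinv : Sig⁻¹.PosDef := hSig.inv
  have hunit : Sig * Sig⁻¹ = 1 := Matrix.mul_nonsing_inv _ hSig.det_pos.ne'.isUnit
  have hunit' : Sig⁻¹ * Sig = 1 := Matrix.nonsing_inv_mul _ hSig.det_pos.ne'.isUnit
  set B : ℝ → Matrix (Fin d) (Fin d) ℝ := fun t => S t - β⁻¹ • Sig with hB
  set D : ℝ → Matrix (Fin d) (Fin d) ℝ := fun t => -(B t * Sig⁻¹) - Sig⁻¹ * B t with hD
  have hDeq : ∀ t, D t = -(S t * Sig⁻¹) - Sig⁻¹ * S t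
      + (2 * β⁻¹) • (1 : Matrix (Fin d) (Fin d) ℝ) := by
    intro t
    simp only [hD, hB, Matrix.sub_mul, Matrix.mul_sub, Matrix.smul_mul, Matrix.mul_smul,
      hunit, hunit']
    ext i j
    simp [Matrix.smul_apply]
    ring
  have hBode : ∀ t i j, HasDerivAt (fun s => B s i j) (D t i j) t := by
    intro t i j
    have h1 : HasDerivAt (fun s => S s i j - (β⁻¹ • Sig) i j)
        ((-(S t * Sig⁻¹) - Sig⁻¹ * S t + (2 * β⁻¹) • (1 : Matrix (Fin d) (Fin d) ℝ)) i j) t :=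
      (hode t i j).sub_const _
    have : D t i j = (-(S t * Sig⁻¹) - Sig⁻¹ * S t
        + (2 * β⁻¹) • (1 : Matrix (Fin d) (Fin d) ℝ)) i j := by rw [hDeq t]
    rw [this]
    exact h1
  -- symmetry of B
  have hBsymm : ∀ t i j, B t j i = B t i j := by
    intro t i j
    have hS := (hsymm t).apply i j
    have hSg := hSigSymm.apply i j
    simp [hB, Matrix.sub_apply, Matrix.smul_apply, hS, hSg]
  -- trace as double sum
  have htr_eq : ∀ (M N : Matrix (Fin d) (Fin d) ℝ),
      (M * N).trace = ∑ i, ∑ j, M i j * N j i := by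
    intro M N
    simp [Matrix.trace, Matrix.mul_apply, Matrix.diag]
  -- trace value identity
  have hval : ∀ t, ∑ i, ∑ j, (D t i j * B t j i + B t i j * D t j i)
      = -4 * (B t * Sig⁻¹ * B t).trace := by
    intro t
    have h1 : ∑ i, ∑ j, (D t i j * B t j i + B t i j * D t j i)
        = (D t * B t).trace + (B t * D t).trace := by
      rw [htr_eq, htr_eq, ← Finset.sum_add_distrib]
      refine Finset.sum_congr rfl fun i _ => ?_
      rw [← Finset.sum_add_distrib]
    rw [h1, Matrix.trace_mul_comm (D t) (B t)]
    have h2 : (B t * D t).trace = -2 * (B t * Sig⁻¹ * B t).trace := by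
      have e1 : B t * D t = -(B t * (B t * Sig⁻¹)) - B t * (Sig⁻¹ * B t) := by
        simp [hD, Matrix.mul_sub, Matrix.mul_neg]
      rw [e1]
      have e2 : (B t * (B t * Sig⁻¹)).trace = (B t * Sig⁻¹ * B t).trace := by
        rw [Matrix.trace_mul_comm]
      have e3 : (B t * (Sig⁻¹ * B t)).trace = (B t * Sig⁻¹ * B t).trace := by
        rw [← Matrix.mul_assoc]
      simp only [Matrix.trace_sub, Matrix.trace_neg, e2, e3]
      ring
    rw [h2]; ring
  have hderiv : ∀ t, HasDerivAt (fun s => (B s * B s).trace)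
      (-4 * (B t * Sig⁻¹ * B t).trace) t := by
    intro t
    have h1 : HasDerivAt (fun s => ∑ i, ∑ j, B s i j * B s j i)
        (∑ i, ∑ j, (D t i j * B t j i + B t i j * D t j i)) t := by
      refine HasDerivAt.fun_sum fun i _ => HasDerivAt.fun_sum fun j _ => ?_
      exact (hBode t i j).mul (hBode t j i)
    rw [hval t] at h1
    have : (fun s => (B s * B s).trace) = fun s => ∑ i, ∑ j, B s i j * B s j i := by
      funext s; exact htr_eq (B s) (B s)
    rw [this]
    exact h1
  have hnonpos : ∀ t, -4 * (B t * Sig⁻¹ * B t).trace ≤ 0 := by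
    intro t
    have hBH : (B t)ᴴ = B t := by
      ext i j
      simp [Matrix.conjTranspose_apply, hBsymm t]
    have hps : ((B t)ᴴ * Sig⁻¹ * B t).PosSemidef :=
      hinv.posSemidef.conjTranspose_mul_mul_same (B t)
    rw [hBH] at hps
    have := trace_nonneg_of_posSemidef hps
    nlinarith
  refine ⟨fun t => ⟨hderiv t, hnonpos t⟩, ?_⟩
  -- Antitone part
  have hg : Antitone (fun t => (B t * B t).trace) := by
    apply antitone_of_deriv_nonpos
    · exact fun t => (hderiv t).differentiableAt
    · intro t
      rw [(hderiv t).deriv]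
      exact hnonpos t
  have hfrob : ∀ t, frobNorm (B t) = Real.sqrt ((B t * B t).trace) := by
    intro t
    unfold frobNorm
    congr 1
    rw [htr_eq]
    refine Finset.sum_congr rfl fun i _ => Finset.sum_congr rfl fun j _ => ?_
    rw [hBsymm t]; ring
  intro a b hab
  show frobNorm (B b) ≤ frobNorm (B a)
  rw [hfrob, hfrob]
  exact Real.sqrt_le_sqrt (hg hab)
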